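/- Under Assumption 1, the uniform law of large numbers holds: sup_{λ ∈ D̃} |G_N(λ) − G(λ)| converges to 0 in probability as N → ∞, where the supremum is taken over the compact parameter set D̃ = [A1,A2]×[−B,B]×[−C,C]. -/

import Mathlib

open MeasureTheory ProbabilityTheory Filter

noncomputable section

/-- The space of observations `(Y^obs, R)` for one examinee and a fixed item is the
discrete space `Option Bool`; we endow it with the discrete σ-algebra. -/
instance : MeasurableSpace (Option Bool) := ⊤

/-- The CDF of the standard normal distribution. -/
def stdNormalCDF (x : ℝ) : ℝ := ((gaussianReal 0 1) (Set.Iic x)).toReal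

/-- The CDF of the standard logistic distribution. -/
def stdLogisticCDF (x : ℝ) : ℝ := 1 / (1 + Real.exp (-x))

/-- Density of the bivariate normal distribution of `(θ, τ)` with mean `(0,0)`,
`Var θ = 1`, `Var τ = vτ` and `Cov(θ, τ) = c`. -/
def biNormalPDF (vτ c : ℝ) (v : ℝ × ℝ) : ℝ :=
  (2 * Real.pi * Real.sqrt (vτ - c ^ 2))⁻¹ *
    Real.exp (-((vτ * v.1 ^ 2 - 2 * c * v.1 * v.2 + v.2 ^ 2) / (2 * (vτ - c ^ 2))))

/-- The marginal probability `P(Y^obs, R | λ)` of the observed data for one examinee and a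
fixed item with parameters `λ = (a, b, ζ)`: the observation `some y` means the response `y`
was observed (`R = 0`), `none` means the response is missing (`R = 1`).  Here
`p = F(a(θ−b))` is the IRT success probability, `π(y) = G(γ0 − τ + ζ + g + γ2·y)` is the
missingness probability, and `(θ, τ)` is integrated against the bivariate normal density. -/
def margLik (F G : ℝ → ℝ) (γ0 γ2 g vτ c : ℝ) (lam : ℝ × ℝ × ℝ) : Option Bool → ℝ
  | some y =>
      ∫ v : ℝ × ℝ,
        ((if y then F (lam.1 * (v.1 - lam.2.1)) else 1 - F (lam.1 * (v.1 - lam.2.1))) *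
            (1 - G (γ0 - v.2 + lam.2.2 + g + γ2 * (if y then 1 else 0)))) *
          biNormalPDF vτ c v
  | none =>
      ∫ v : ℝ × ℝ,
        (F (lam.1 * (v.1 - lam.2.1)) * G (γ0 - v.2 + lam.2.2 + g + γ2) +
            (1 - F (lam.1 * (v.1 - lam.2.1))) * G (γ0 - v.2 + lam.2.2 + g)) *
          biNormalPDF vτ c v

/-- `G_N(λ)`, the normalized log marginal likelihood of the first `N` observations. -/
def GN (F G : ℝ → ℝ) (γ0 γ2 g vτ c : ℝ) {Ω : Type*} (X : ℕ → Ω → Option Bool)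
    (N : ℕ) (lam : ℝ × ℝ × ℝ) (ω : Ω) : ℝ :=
  (N : ℝ)⁻¹ * ∑ i ∈ Finset.range N, Real.log (margLik F G γ0 γ2 g vτ c lam (X i ω))

/-- `G(λ) = E[log P(Y^obs, R | λ)]`, the expectation taken under the true parameter `λ0`. -/
def Gbar (F G : ℝ → ℝ) (γ0 γ2 g vτ c : ℝ) (lam0 lam : ℝ × ℝ × ℝ) : ℝ :=
  ∑ x : Option Bool,
    margLik F G γ0 γ2 g vτ c lam0 x * Real.log (margLik F G γ0 γ2 g vτ c lam x)

/-! ### Auxiliary lemmas -/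

lemma stdLogisticCDF_pos (x : ℝ) : 0 < stdLogisticCDF x := by
  unfold stdLogisticCDF; positivity

lemma stdLogisticCDF_lt_one (x : ℝ) : stdLogisticCDF x < 1 := by
  unfold stdLogisticCDF
  rw [div_lt_one (by positivity)]
  linarith [Real.exp_pos (-x)]

lemma stdLogisticCDF_mono : Monotone stdLogisticCDF := by
  intro a b hab
  unfold stdLogisticCDF
  have h1 : (0:ℝ) < 1 + Real.exp (-b) := by positivity
  have h2 : 1 + Real.exp (-b) ≤ 1 + Real.exp (-a) := by
    have := Real.exp_le_exp.2 (neg_le_neg hab)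
    linarith
  exact one_div_le_one_div_of_le h1 h2

lemma gaussianReal_Iic_pos (x : ℝ) : 0 < (gaussianReal 0 1 (Set.Iic x)) := by
  have h := gaussianReal_absolutelyContinuous' 0 (v := 1) one_ne_zero
  by_contra h0
  push_neg at h0
  have : gaussianReal 0 1 (Set.Iic x) = 0 := le_antisymm h0 (by simp)
  have hv : (volume (Set.Iic x)) = 0 := h this
  simp at hv

lemma gaussianReal_Iic_lt_one (x : ℝ) : (gaussianReal 0 1 (Set.Iic x)) < 1 := by
  have h := gaussianReal_absolutelyContinuous' 0 (v := 1) one_ne_zero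
  have hIoi : 0 < gaussianReal 0 1 (Set.Ioi x) := by
    by_contra h0
    push_neg at h0
    have : gaussianReal 0 1 (Set.Ioi x) = 0 := le_antisymm h0 (by simp)
    have hv : (volume (Set.Ioi x)) = 0 := h this
    simp at hv
  have hunion : gaussianReal 0 1 (Set.Iic x) + gaussianReal 0 1 (Set.Ioi x) = 1 := by
    rw [← measure_union (Set.Iic_disjoint_Ioi le_rfl) measurableSet_Ioi, Set.Iic_union_Ioi,
      measure_univ]
  calc gaussianReal 0 1 (Set.Iic x) < gaussianReal 0 1 (Set.Iic x) + gaussianReal 0 1 (Set.Ioi x) :=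
        ENNReal.lt_add_right (measure_ne_top _ _) hIoi.ne'
    _ = 1 := hunion

lemma stdNormalCDF_pos (x : ℝ) : 0 < stdNormalCDF x :=
  ENNReal.toReal_pos (gaussianReal_Iic_pos x).ne' (measure_ne_top _ _)

lemma stdNormalCDF_lt_one (x : ℝ) : stdNormalCDF x < 1 := by
  have := gaussianReal_Iic_lt_one x
  unfold stdNormalCDF
  rw [show (1:ℝ) = (1 : ENNReal).toReal by simp]
  exact ENNReal.toReal_strict_mono (by simp) this

lemma stdNormalCDF_mono : Monotone stdNormalCDF := by
  intro a b hab
  exact ENNReal.toReal_mono (measure_ne_top _ _) (measure_mono (Set.Iic_subset_Iic.2 hab))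

lemma stdNormalCDF_measurable : Measurable stdNormalCDF :=
  stdNormalCDF_mono.measurable

lemma stdLogisticCDF_measurable : Measurable stdLogisticCDF :=
  stdLogisticCDF_mono.measurable

lemma biNormalPDF_pos {vτ c : ℝ} (h : c ^ 2 < vτ) (v : ℝ × ℝ) : 0 < biNormalPDF vτ c v := by
  have hd : 0 < vτ - c ^ 2 := by linarith
  have hs : 0 < Real.sqrt (vτ - c ^ 2) := Real.sqrt_pos.2 hd
  have := Real.pi_pos
  unfold biNormalPDF
  positivity

lemma measurable_biNormalPDF {vτ c : ℝ} : Measurable (biNormalPDF vτ c) := by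
  unfold biNormalPDF; fun_prop

lemma biNormalPDF_eq {vτ c : ℝ} (h : c ^ 2 < vτ) (v : ℝ × ℝ) :
    biNormalPDF vτ c v = (2 * Real.pi * Real.sqrt (vτ - c ^ 2))⁻¹ *
      (Real.exp (-(v.1 ^ 2 / 2)) * Real.exp (-((v.2 - c * v.1) ^ 2 / (2 * (vτ - c ^ 2))))) := by
  have hd : vτ - c ^ 2 ≠ 0 := by nlinarith
  unfold biNormalPDF
  rw [← Real.exp_add]
  congr 1
  field_simp
  ring

lemma integrable_gauss_shift {b : ℝ} (hb : 0 < b) (a : ℝ) :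
    Integrable (fun t : ℝ => Real.exp (-((t - a) ^ 2 / b))) := by
  have h0 : Integrable fun s : ℝ => Real.exp (-b⁻¹ * s ^ 2) :=
    integrable_exp_neg_mul_sq (inv_pos.2 hb)
  have h1 := h0.comp_sub_right a
  refine h1.congr (ae_of_all _ fun t => ?_)
  simp only []
  rw [div_eq_inv_mul, neg_mul]

lemma biNormalPDF_integrable {vτ c : ℝ} (h : c ^ 2 < vτ) : Integrable (biNormalPDF vτ c) := by
  have hd : 0 < vτ - c ^ 2 := by linarith
  have hmeas : AEStronglyMeasurable (biNormalPDF vτ c)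
      ((volume : Measure ℝ).prod (volume : Measure ℝ)) := by
    rw [← Measure.volume_eq_prod]
    exact measurable_biNormalPDF.aestronglyMeasurable
  have key : Integrable (biNormalPDF vτ c) ((volume : Measure ℝ).prod (volume : Measure ℝ)) := by
    rw [integrable_prod_iff hmeas]
    constructor
    · refine ae_of_all _ fun θ => ?_
      have : (fun τ => biNormalPDF vτ c (θ, τ)) = fun τ =>
          ((2 * Real.pi * Real.sqrt (vτ - c ^ 2))⁻¹ * Real.exp (-(θ ^ 2 / 2))) *
            Real.exp (-((τ - c * θ) ^ 2 / (2 * (vτ - c ^ 2)))) := by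
        funext τ
        rw [biNormalPDF_eq h (θ, τ)]
        ring
      rw [this]
      exact ((integrable_gauss_shift (by positivity) (c * θ)).const_mul _)
    · have heq : (fun θ => ∫ τ, ‖biNormalPDF vτ c (θ, τ)‖) = fun θ =>
          ((2 * Real.pi * Real.sqrt (vτ - c ^ 2))⁻¹ *
            (∫ τ : ℝ, Real.exp (-(τ ^ 2 / (2 * (vτ - c ^ 2)))))) * Real.exp (-(θ ^ 2 / 2)) := by
        funext θ
        have h1 : ∀ τ : ℝ, ‖biNormalPDF vτ c (θ, τ)‖ =
            ((2 * Real.pi * Real.sqrt (vτ - c ^ 2))⁻¹ * Real.exp (-(θ ^ 2 / 2))) *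
              Real.exp (-((τ - c * θ) ^ 2 / (2 * (vτ - c ^ 2)))) := by
          intro τ
          rw [Real.norm_eq_abs, abs_of_nonneg (biNormalPDF_pos h (θ, τ)).le,
            biNormalPDF_eq h (θ, τ)]
          ring
        simp only [h1]
        rw [integral_const_mul]
        rw [show (fun τ : ℝ => Real.exp (-((τ - c * θ) ^ 2 / (2 * (vτ - c ^ 2)))))
            = fun τ : ℝ => (fun s : ℝ => Real.exp (-(s ^ 2 / (2 * (vτ - c ^ 2))))) (τ - c * θ)
            from rfl]
        rw [integral_sub_right_eq_self (fun s : ℝ => Real.exp (-(s ^ 2 / (2 * (vτ - c ^ 2)))))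
          (c * θ)]
        ring
      rw [heq]
      have : Integrable (fun θ : ℝ => Real.exp (-(θ ^ 2 / 2))) := by
        have := integrable_gauss_shift (show (0:ℝ) < 2 by norm_num) 0
        simpa using this
      exact this.const_mul _
  rw [← Measure.volume_eq_prod] at key
  exact key

lemma integrable_of_bounds {vτ c : ℝ} (hvτ : c ^ 2 < vτ) {f : ℝ × ℝ → ℝ} (hm : Measurable f)
    (h0 : ∀ v, 0 ≤ f v) (h1 : ∀ v, f v ≤ biNormalPDF vτ c v) : Integrable f :=
  (biNormalPDF_integrable hvτ).mono' hm.aestronglyMeasurable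
    (ae_of_all _ fun v => by rw [Real.norm_eq_abs, abs_of_nonneg (h0 v)]; exact h1 v)

lemma prod_mul_le {u v w z d : ℝ} (hv0 : 0 ≤ v) (hw0 : 0 ≤ w) (hu1 : u ≤ w) (hv1 : v ≤ z)
    (hd : 0 ≤ d) : (u * v) * d ≤ (w * z) * d :=
  mul_le_mul_of_nonneg_right (mul_le_mul hu1 hv1 hv0 hw0) hd

lemma margLik_mem_Icc {F G : ℝ → ℝ} {γ0 γ2 g vτ c A1 A2 B C : ℝ}
    (hF0 : ∀ x, 0 < F x) (hF1 : ∀ x, F x < 1) (hFmono : Monotone F) (hFmeas : Measurable F)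
    (hG0 : ∀ x, 0 < G x) (hG1 : ∀ x, G x < 1) (hGmono : Monotone G) (hGmeas : Measurable G)
    (hvτ : c ^ 2 < vτ) (hγ2 : γ2 < 0) (hA1 : 0 < A1) :
    ∃ m I : ℝ, 0 < m ∧ m ≤ I ∧
      ∀ lam ∈ (Set.Icc A1 A2 ×ˢ (Set.Icc (-B) B ×ˢ Set.Icc (-C) C) : Set (ℝ × ℝ × ℝ)),
        ∀ x, margLik F G γ0 γ2 g vτ c lam x ∈ Set.Icc m I := by
  classical
  set D : (ℝ × ℝ) → ℝ := biNormalPDF vτ c with hD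
  set L : (ℝ × ℝ) → ℝ := fun v =>
    ((F (-(A2 * (|v.1| + B))) * (1 - F (A2 * (|v.1| + B)))) *
      ((1 - G (γ0 - v.2 + C + g)) * G (γ0 - v.2 - C + g + γ2))) * D v with hLdef
  have hDpos : ∀ v, 0 < D v := biNormalPDF_pos hvτ
  have hDint : Integrable D := biNormalPDF_integrable hvτ
  have hLpos : ∀ v, 0 < L v := by
    intro v
    have h1 := hF0 (-(A2 * (|v.1| + B)))
    have h4 := hF1 (A2 * (|v.1| + B))
    have h6 := hG1 (γ0 - v.2 + C + g)
    have h7 := hG0 (γ0 - v.2 - C + g + γ2)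
    have hDv := hDpos v
    apply mul_pos (mul_pos (mul_pos h1 (by linarith)) (mul_pos (by linarith) h7)) hDv
  have hLleD : ∀ v, L v ≤ D v := by
    intro v
    have h1 := hF0 (-(A2 * (|v.1| + B)))
    have h2 := hF1 (-(A2 * (|v.1| + B)))
    have h3 := hF0 (A2 * (|v.1| + B))
    have h4 := hF1 (A2 * (|v.1| + B))
    have h5 := hG0 (γ0 - v.2 + C + g)
    have h6 := hG1 (γ0 - v.2 + C + g)
    have h7 := hG0 (γ0 - v.2 - C + g + γ2)
    have h8 := hG1 (γ0 - v.2 - C + g + γ2)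
    have hDv := hDpos v
    have : ((F (-(A2 * (|v.1| + B))) * (1 - F (A2 * (|v.1| + B)))) *
        ((1 - G (γ0 - v.2 + C + g)) * G (γ0 - v.2 - C + g + γ2))) ≤ 1 := by
      have e1 : F (-(A2 * (|v.1| + B))) * (1 - F (A2 * (|v.1| + B))) ≤ 1 :=
        mul_le_one₀ h2.le (by linarith) (by linarith)
      have e2 : (1 - G (γ0 - v.2 + C + g)) * G (γ0 - v.2 - C + g + γ2) ≤ 1 :=
        mul_le_one₀ (by linarith) h7.le h8.le
      have e3 : (0:ℝ) ≤ (1 - G (γ0 - v.2 + C + g)) * G (γ0 - v.2 - C + g + γ2) :=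
        mul_nonneg (by linarith) h7.le
      exact mul_le_one₀ e1 e3 e2
    calc L v ≤ 1 * D v := mul_le_mul_of_nonneg_right this hDv.le
      _ = D v := one_mul _
  have hLmeas : Measurable L := by
    apply Measurable.mul ?_ measurable_biNormalPDF
    apply Measurable.mul
    · exact (hFmeas.comp (by fun_prop)).mul (measurable_const.sub (hFmeas.comp (by fun_prop)))
    · exact (measurable_const.sub (hGmeas.comp (by fun_prop))).mul (hGmeas.comp (by fun_prop))
  have hLint : Integrable L :=
    integrable_of_bounds hvτ hLmeas (fun v => (hLpos v).le) hLleD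
  refine ⟨∫ v, L v, ∫ v, D v, ?_, integral_mono hLint hDint hLleD, ?_⟩
  · rw [integral_pos_iff_support_of_nonneg (fun v => (hLpos v).le) hLint]
    have hsupp : Function.support L = Set.univ := by
      ext v; simp [Function.mem_support, (hLpos v).ne']
    rw [hsupp]
    exact isOpen_univ.measure_pos volume Set.univ_nonempty
  rintro ⟨a, b, ζ⟩ hmem x
  simp only [Set.mem_prod, Set.mem_Icc] at hmem
  obtain ⟨⟨ha1, ha2⟩, ⟨hb1, hb2⟩, hζ1, hζ2⟩ := hmem
  have ha0 : 0 < a := lt_of_lt_of_le hA1 ha1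
  have hA2pos : 0 < A2 := lt_of_lt_of_le ha0 ha2
  have hFarg : ∀ θ : ℝ, -(A2 * (|θ| + B)) ≤ a * (θ - b) ∧ a * (θ - b) ≤ A2 * (|θ| + B) := by
    intro θ
    have habs : |a * (θ - b)| ≤ A2 * (|θ| + B) := by
      rw [abs_mul, abs_of_pos ha0]
      have h2 : |θ - b| ≤ |θ| + B := by
        have hbB : |b| ≤ B := abs_le.2 ⟨hb1, hb2⟩
        have := abs_sub θ b
        linarith
      exact mul_le_mul ha2 h2 (abs_nonneg _) hA2pos.le
    exact abs_le.1 habs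
  have key : ∀ f : (ℝ × ℝ) → ℝ, Measurable f → (∀ v, L v ≤ f v) → (∀ v, f v ≤ D v) →
      (∫ v, f v) ∈ Set.Icc (∫ v, L v) (∫ v, D v) := by
    intro f hfm hfl hfu
    have hfint : Integrable f := integrable_of_bounds hvτ hfm
      (fun v => le_trans (hLpos v).le (hfl v)) hfu
    exact ⟨integral_mono hLint hfint hfl, integral_mono hfint hDint hfu⟩
  match x with
  | some true =>
    simp only [margLik, if_true]
    apply key
    · exact ((hFmeas.comp (by fun_prop)).mul
        (measurable_const.sub (hGmeas.comp (by fun_prop)))).mul measurable_biNormalPDF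
    · intro v
      have h1 : F (-(A2 * (|v.1| + B))) ≤ F (a * (v.1 - b)) := hFmono (hFarg v.1).1
      have h2 : 1 - G (γ0 - v.2 + C + g) ≤ 1 - G (γ0 - v.2 + ζ + g + γ2 * 1) := by
        have := hGmono (show γ0 - v.2 + ζ + g + γ2 * 1 ≤ γ0 - v.2 + C + g by linarith)
        linarith
      have h3 := hF0 (-(A2 * (|v.1| + B)))
      have h4 := hF1 (A2 * (|v.1| + B))
      have h5 := (hG0 (γ0 - v.2 - C + g + γ2)).le
      have h6 := (hG1 (γ0 - v.2 - C + g + γ2)).le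
      have h7 := hG1 (γ0 - v.2 + C + g)
      have h4' := hF0 (A2 * (|v.1| + B))
      have hu1 : F (-(A2 * (|v.1| + B))) * (1 - F (A2 * (|v.1| + B))) ≤ F (a * (v.1 - b)) := by
        have := mul_le_of_le_one_right h3.le (by linarith : 1 - F (A2 * (|v.1| + B)) ≤ 1)
        linarith
      have hv1 : (1 - G (γ0 - v.2 + C + g)) * G (γ0 - v.2 - C + g + γ2)
          ≤ 1 - G (γ0 - v.2 + ζ + g + γ2 * 1) := by
        have := mul_le_of_le_one_right (by linarith : (0:ℝ) ≤ 1 - G (γ0 - v.2 + C + g)) h6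
        linarith
      exact prod_mul_le (by nlinarith) (hF0 (a * (v.1 - b))).le hu1 hv1 (hDpos v).le
    · intro v
      have h1 := hF0 (a * (v.1 - b))
      have h2 := hF1 (a * (v.1 - b))
      have h3 := hG0 (γ0 - v.2 + ζ + g + γ2 * 1)
      have h4 := hG1 (γ0 - v.2 + ζ + g + γ2 * 1)
      have hDv := (hDpos v).le
      calc F (a * (v.1 - b)) * (1 - G (γ0 - v.2 + ζ + g + γ2 * 1)) * D v
          ≤ 1 * D v := mul_le_mul_of_nonneg_right (by nlinarith) hDv
        _ = D v := one_mul _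
  | some false =>
    simp only [margLik, Bool.false_eq_true, if_false, mul_zero, add_zero]
    apply key
    · exact ((measurable_const.sub (hFmeas.comp (by fun_prop))).mul
        (measurable_const.sub (hGmeas.comp (by fun_prop)))).mul measurable_biNormalPDF
    · intro v
      have h1 : F (a * (v.1 - b)) ≤ F (A2 * (|v.1| + B)) := hFmono (hFarg v.1).2
      have h2 : 1 - G (γ0 - v.2 + C + g) ≤ 1 - G (γ0 - v.2 + ζ + g) := by
        have := hGmono (show γ0 - v.2 + ζ + g ≤ γ0 - v.2 + C + g by linarith)
        linarith
      have h3 := hF0 (-(A2 * (|v.1| + B)))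
      have h3' := hF1 (-(A2 * (|v.1| + B)))
      have h4 := hF0 (A2 * (|v.1| + B))
      have h4' := hF1 (A2 * (|v.1| + B))
      have h5 := (hG0 (γ0 - v.2 - C + g + γ2)).le
      have h6 := (hG1 (γ0 - v.2 - C + g + γ2)).le
      have h7 := hG1 (γ0 - v.2 + C + g)
      have hu1 : F (-(A2 * (|v.1| + B))) * (1 - F (A2 * (|v.1| + B))) ≤ 1 - F (a * (v.1 - b)) := by
        have := mul_le_of_le_one_left (by linarith : (0:ℝ) ≤ 1 - F (A2 * (|v.1| + B))) h3'.le
        linarith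
      have hv1 : (1 - G (γ0 - v.2 + C + g)) * G (γ0 - v.2 - C + g + γ2)
          ≤ 1 - G (γ0 - v.2 + ζ + g) := by
        have := mul_le_of_le_one_right (by linarith : (0:ℝ) ≤ 1 - G (γ0 - v.2 + C + g)) h6
        linarith
      exact prod_mul_le (by nlinarith) (by linarith [hF1 (a * (v.1 - b))]) hu1 hv1 (hDpos v).le
    · intro v
      have h1 := hF0 (a * (v.1 - b))
      have h2 := hF1 (a * (v.1 - b))
      have h3 := hG0 (γ0 - v.2 + ζ + g)
      have h4 := hG1 (γ0 - v.2 + ζ + g)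
      calc (1 - F (a * (v.1 - b))) * (1 - G (γ0 - v.2 + ζ + g)) * D v
          ≤ 1 * D v := mul_le_mul_of_nonneg_right (by nlinarith) (hDpos v).le
        _ = D v := one_mul _
  | none =>
    simp only [margLik]
    apply key
    · exact (((hFmeas.comp (by fun_prop)).mul (hGmeas.comp (by fun_prop))).add
        ((measurable_const.sub (hFmeas.comp (by fun_prop))).mul
          (hGmeas.comp (by fun_prop)))).mul measurable_biNormalPDF
    · intro v
      have h1 := hF0 (-(A2 * (|v.1| + B)))
      have h2 := hF1 (-(A2 * (|v.1| + B)))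
      have h3 := hF0 (A2 * (|v.1| + B))
      have h4 := hF1 (A2 * (|v.1| + B))
      have h5 := hG0 (γ0 - v.2 + C + g)
      have h6 := hG1 (γ0 - v.2 + C + g)
      have h7 := hG0 (γ0 - v.2 - C + g + γ2)
      have h8 := hG1 (γ0 - v.2 - C + g + γ2)
      have hp0 := hF0 (a * (v.1 - b))
      have hp1 := hF1 (a * (v.1 - b))
      have hGl1 : G (γ0 - v.2 - C + g + γ2) ≤ G (γ0 - v.2 + ζ + g + γ2) :=
        hGmono (by linarith)
      have hGl0 : G (γ0 - v.2 - C + g + γ2) ≤ G (γ0 - v.2 + ζ + g) :=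
        hGmono (by linarith)
      have step1 : (F (-(A2 * (|v.1| + B))) * (1 - F (A2 * (|v.1| + B)))) *
          ((1 - G (γ0 - v.2 + C + g)) * G (γ0 - v.2 - C + g + γ2))
          ≤ G (γ0 - v.2 - C + g + γ2) := by
        have e1 : F (-(A2 * (|v.1| + B))) * (1 - F (A2 * (|v.1| + B))) ≤ 1 :=
          mul_le_one₀ h2.le (by linarith) (by linarith)
        have e2 : (1 - G (γ0 - v.2 + C + g)) * G (γ0 - v.2 - C + g + γ2)
            ≤ G (γ0 - v.2 - C + g + γ2) :=
          mul_le_of_le_one_left h7.le (by linarith)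
        have e3 : (0:ℝ) ≤ (1 - G (γ0 - v.2 + C + g)) * G (γ0 - v.2 - C + g + γ2) :=
          mul_nonneg (by linarith) h7.le
        calc (F (-(A2 * (|v.1| + B))) * (1 - F (A2 * (|v.1| + B)))) *
            ((1 - G (γ0 - v.2 + C + g)) * G (γ0 - v.2 - C + g + γ2))
            ≤ (1 - G (γ0 - v.2 + C + g)) * G (γ0 - v.2 - C + g + γ2) :=
              mul_le_of_le_one_left e3 e1
          _ ≤ G (γ0 - v.2 - C + g + γ2) := e2
      have step2 : G (γ0 - v.2 - C + g + γ2) ≤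
          F (a * (v.1 - b)) * G (γ0 - v.2 + ζ + g + γ2) +
            (1 - F (a * (v.1 - b))) * G (γ0 - v.2 + ζ + g) := by
        nlinarith [mul_le_mul_of_nonneg_left hGl1 hp0.le,
          mul_le_mul_of_nonneg_left hGl0 (by linarith : (0:ℝ) ≤ 1 - F (a * (v.1 - b)))]
      calc L v ≤ G (γ0 - v.2 - C + g + γ2) * D v :=
            mul_le_mul_of_nonneg_right step1 (hDpos v).le
        _ ≤ (F (a * (v.1 - b)) * G (γ0 - v.2 + ζ + g + γ2) +
              (1 - F (a * (v.1 - b))) * G (γ0 - v.2 + ζ + g)) * D v :=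
            mul_le_mul_of_nonneg_right step2 (hDpos v).le
    · intro v
      have hp0 := hF0 (a * (v.1 - b))
      have hp1 := hF1 (a * (v.1 - b))
      have h3 := hG0 (γ0 - v.2 + ζ + g + γ2)
      have h4 := hG1 (γ0 - v.2 + ζ + g + γ2)
      have h5 := hG0 (γ0 - v.2 + ζ + g)
      have h6 := hG1 (γ0 - v.2 + ζ + g)
      have e1 : F (a * (v.1 - b)) * G (γ0 - v.2 + ζ + g + γ2) ≤ F (a * (v.1 - b)) :=
        mul_le_of_le_one_right hp0.le h4.le
      have e2 : (1 - F (a * (v.1 - b))) * G (γ0 - v.2 + ζ + g) ≤ 1 - F (a * (v.1 - b)) :=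
        mul_le_of_le_one_right (by linarith) h6.le
      calc (F (a * (v.1 - b)) * G (γ0 - v.2 + ζ + g + γ2) +
            (1 - F (a * (v.1 - b))) * G (γ0 - v.2 + ζ + g)) * D v
          ≤ 1 * D v := mul_le_mul_of_nonneg_right (by linarith) (hDpos v).le
        _ = D v := one_mul _

theorem uniform_law_of_large_numbers
    {Ω : Type*} [MeasurableSpace Ω] (μ : Measure Ω) [IsProbabilityMeasure μ]
    -- the link functions are the standard normal or standard logistic CDF
    (F G : ℝ → ℝ)
    (hF : F = stdNormalCDF ∨ F = stdLogisticCDF)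
    (hG : G = stdNormalCDF ∨ G = stdLogisticCDF)
    -- known missingness parameters and latent covariance structure
    (γ0 γ1 γ2 g vτ c : ℝ)
    (hγ0 : γ0 < 0) (hγ1 : 0 < γ1) (hγ2 : γ2 < 0) (hvτ : c ^ 2 < vτ)
    -- the compact parameter set `D̃`
    (A1 A2 B C : ℝ) (hA1 : 0 < A1) (hA12 : A1 < A2) (hB : 0 < B) (hC : 0 < C)
    (Dtil : Set (ℝ × ℝ × ℝ))
    (hDtil : Dtil = Set.Icc A1 A2 ×ˢ (Set.Icc (-B) B ×ˢ Set.Icc (-C) C))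
    -- the true parameter
    (lam0 : ℝ × ℝ × ℝ) (hlam0 : lam0 ∈ Dtil)
    -- Assumption 1: the integrals m1, m2, m3, m4 are finite
    (cconst : ℝ)
    (hm1 : Integrable (fun v : ℝ × ℝ => Real.log (F (A1 * (v.1 - B))) * biNormalPDF vτ c v))
    (hm2 : Integrable (fun v : ℝ × ℝ => Real.log (1 - F (A2 * (v.1 + B))) * biNormalPDF vτ c v))
    (hm3 : Integrable (fun v : ℝ × ℝ => Real.log (G (cconst - v.2 - C)) * biNormalPDF vτ c v))
    (hm4 : Integrable (fun v : ℝ × ℝ => Real.log (1 - G (cconst - v.2 - C)) * biNormalPDF vτ c v))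
    -- i.i.d. observations distributed according to the true parameter `λ0`
    (X : ℕ → Ω → Option Bool) (hXmeas : ∀ i, Measurable (X i))
    (hXlaw : ∀ i x, μ (X i ⁻¹' {x}) = ENNReal.ofReal (margLik F G γ0 γ2 g vτ c lam0 x))
    (hXindep : iIndepFun X μ) :
    ∀ ε : ℝ, 0 < ε →
      Tendsto (fun N : ℕ =>
          μ {ω | ε ≤ sSup ((fun lam =>
              |GN F G γ0 γ2 g vτ c X N lam ω - Gbar F G γ0 γ2 g vτ c lam0 lam|) '' Dtil)})
        atTop (nhds 0) := by
  classical
  intro ε hε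
  -- properties of the link functions
  obtain ⟨hF0, hF1, hFmono, hFmeas⟩ :
      (∀ x, 0 < F x) ∧ (∀ x, F x < 1) ∧ Monotone F ∧ Measurable F := by
    rcases hF with h | h <;> subst h
    · exact ⟨stdNormalCDF_pos, stdNormalCDF_lt_one, stdNormalCDF_mono, stdNormalCDF_measurable⟩
    · exact ⟨stdLogisticCDF_pos, stdLogisticCDF_lt_one, stdLogisticCDF_mono,
        stdLogisticCDF_measurable⟩
  obtain ⟨hG0, hG1, hGmono, hGmeas⟩ :
      (∀ x, 0 < G x) ∧ (∀ x, G x < 1) ∧ Monotone G ∧ Measurable G := by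
    rcases hG with h | h <;> subst h
    · exact ⟨stdNormalCDF_pos, stdNormalCDF_lt_one, stdNormalCDF_mono, stdNormalCDF_measurable⟩
    · exact ⟨stdLogisticCDF_pos, stdLogisticCDF_lt_one, stdLogisticCDF_mono,
        stdLogisticCDF_measurable⟩
  -- uniform bounds for the marginal likelihood on the compact parameter set
  obtain ⟨m, I, hm, hmI, hbound⟩ := margLik_mem_Icc (γ0 := γ0) (g := g) (A2 := A2) (B := B)
    (C := C) hF0 hF1 hFmono hFmeas hG0 hG1 hGmono hGmeas hvτ hγ2 hA1
  have hbound' : ∀ lam ∈ Dtil, ∀ x,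
      margLik F G γ0 γ2 g vτ c lam x ∈ Set.Icc m I := by
    rw [hDtil]; exact hbound
  set Mlog : ℝ := max |Real.log m| |Real.log I| with hMlogdef
  have hMlog0 : 0 ≤ Mlog := le_trans (abs_nonneg _) (le_max_left _ _)
  have hMlog : ∀ lam ∈ Dtil, ∀ x, |Real.log (margLik F G γ0 γ2 g vτ c lam x)| ≤ Mlog := by
    intro lam hl x
    obtain ⟨h1, h2⟩ := hbound' lam hl x
    have hy : 0 < margLik F G γ0 γ2 g vτ c lam x := lt_of_lt_of_le hm h1
    rw [abs_le]
    constructor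
    · have hlog1 : Real.log m ≤ Real.log (margLik F G γ0 γ2 g vτ c lam x) :=
        Real.log_le_log hm h1
      have hlog2 : -|Real.log m| ≤ Real.log m := neg_abs_le _
      have hlog3 : |Real.log m| ≤ Mlog := le_max_left _ _
      linarith
    · have hlog1 : Real.log (margLik F G γ0 γ2 g vτ c lam x) ≤ Real.log I :=
        Real.log_le_log hy h2
      have hlog2 : Real.log I ≤ |Real.log I| := le_abs_self _
      have hlog3 : |Real.log I| ≤ Mlog := le_max_right _ _
      linarith
  set p : Option Bool → ℝ := fun x => margLik F G γ0 γ2 g vτ c lam0 x with hpdef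
  have hp0 : ∀ x, 0 < p x := fun x => lt_of_lt_of_le hm (hbound' lam0 hlam0 x).1
  -- indicator variables
  set Z : Option Bool → ℕ → Ω → ℝ := fun x i ω => if X i ω = x then 1 else 0 with hZdef
  have hφmeas : ∀ x : Option Bool,
      Measurable (fun o : Option Bool => if o = x then (1:ℝ) else 0) :=
    fun x => measurable_from_top
  have hZmeas : ∀ x i, Measurable (Z x i) := fun x i => (hφmeas x).comp (hXmeas i)
  -- the observations are identically distributed
  have hpre : ∀ (i : ℕ) (s : Set (Option Bool)), μ (X i ⁻¹' s) = μ (X 0 ⁻¹' s) := by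
    intro i s
    have key : ∀ j : ℕ, μ (X j ⁻¹' s)
        = ∑' x : s, ENNReal.ofReal (margLik F G γ0 γ2 g vτ c lam0 x) := by
      intro j
      rw [← Set.biUnion_preimage_singleton (X j) s]
      rw [measure_biUnion s.to_countable ?_ (fun x _ => hXmeas j (measurableSet_singleton _))]
      · exact tsum_congr fun x => hXlaw j x
      · intro x hx y hy hxy
        refine Set.disjoint_left.2 fun ω h1 h2 => hxy ?_
        simp only [Set.mem_preimage, Set.mem_singleton_iff] at h1 h2
        exact h1.symm.trans h2
    rw [key i, key 0]
  have hident : ∀ i, IdentDistrib (X i) (X 0) μ μ := fun i =>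
    ⟨(hXmeas i).aemeasurable, (hXmeas 0).aemeasurable,
      Measure.ext fun s hs => by
        rw [Measure.map_apply (hXmeas i) hs, Measure.map_apply (hXmeas 0) hs, hpre]⟩
  have hZident : ∀ x i, IdentDistrib (Z x i) (Z x 0) μ μ := fun x i =>
    (hident i).comp (hφmeas x)
  have hZindep : ∀ x : Option Bool, Pairwise (Function.onFun (IndepFun · · μ) (Z x)) := by
    intro x i j hij
    exact (hXindep.comp (fun _ (o : Option Bool) => if o = x then (1:ℝ) else 0)
      (fun _ => hφmeas x)).indepFun hij
  have hZint : ∀ x, Integrable (Z x 0) μ := by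
    intro x
    refine (integrable_const (1:ℝ)).mono' (hZmeas x 0).aestronglyMeasurable
      (ae_of_all _ fun ω => ?_)
    simp only [hZdef, Real.norm_eq_abs]
    split <;> simp
  have hZexp : ∀ x, ∫ ω, Z x 0 ω ∂μ = p x := by
    intro x
    have hZeq : Z x 0 = (X 0 ⁻¹' {x}).indicator (fun _ => (1:ℝ)) := by
      funext ω
      simp [hZdef, Set.indicator_apply]
    rw [hZeq, integral_indicator_const (1:ℝ) (hXmeas 0 (measurableSet_singleton _)), measureReal_def, hXlaw 0 x]
    simp [ENNReal.toReal_ofReal (hp0 x).le, hpdef]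
    exact (hp0 x).le
  -- strong law of large numbers for the indicators, hence convergence in measure
  have htim : ∀ x : Option Bool, TendstoInMeasure μ
      (fun (n : ℕ) ω => (∑ i ∈ Finset.range n, Z x i ω) / n) atTop (fun _ => p x) := by
    intro x
    have hae := strong_law_ae_real (Z x) (hZint x) (hZindep x) (fun i => hZident x i)
    rw [hZexp x] at hae
    refine tendstoInMeasure_of_tendsto_ae (fun n => ?_) hae
    exact ((Finset.measurable_sum _ (fun i _ => hZmeas x i)).div_const _).aestronglyMeasurable
  -- the quantitative bound
  set Mb : ℝ := Mlog + 1 with hMbdef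
  have hMb : 0 < Mb := by linarith
  set ε' : ℝ := ε / (3 * Mb) with hε'def
  have hε' : 0 < ε' := by positivity
  have hsub : ∀ n : ℕ,
      {ω | ε ≤ sSup ((fun lam =>
          |GN F G γ0 γ2 g vτ c X n lam ω - Gbar F G γ0 γ2 g vτ c lam0 lam|) '' Dtil)} ⊆
        ⋃ x : Option Bool,
          {ω | ε' ≤ dist ((∑ i ∈ Finset.range n, Z x i ω) / n) (p x)} := by
    intro n ω hω
    simp only [Set.mem_setOf_eq] at hω
    by_contra hnot
    simp only [Set.mem_iUnion, Set.mem_setOf_eq, not_exists, not_le] at hnot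
    have hsuple : sSup ((fun lam =>
        |GN F G γ0 γ2 g vτ c X n lam ω - Gbar F G γ0 γ2 g vτ c lam0 lam|) '' Dtil)
        ≤ ∑ _x : Option Bool, ε' * Mlog := by
      refine Real.sSup_le ?_ (Finset.sum_nonneg fun x _ => mul_nonneg hε'.le hMlog0)
      rintro y ⟨lam, hlam, rfl⟩
      have hlogeq : ∀ i, Real.log (margLik F G γ0 γ2 g vτ c lam (X i ω))
          = ∑ x : Option Bool, Z x i ω * Real.log (margLik F G γ0 γ2 g vτ c lam x) := by
        intro i
        symm
        simp [hZdef, ite_mul]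
      have h1 : GN F G γ0 γ2 g vτ c X n lam ω = ∑ x : Option Bool,
          ((∑ i ∈ Finset.range n, Z x i ω) / n) *
            Real.log (margLik F G γ0 γ2 g vτ c lam x) := by
        simp only [GN]
        rw [Finset.sum_congr rfl fun i _ => hlogeq i, Finset.sum_comm, Finset.mul_sum]
        refine Finset.sum_congr rfl fun x _ => ?_
        rw [← Finset.sum_mul]
        ring
      have hGNid : GN F G γ0 γ2 g vτ c X n lam ω - Gbar F G γ0 γ2 g vτ c lam0 lam
          = ∑ x : Option Bool, ((∑ i ∈ Finset.range n, Z x i ω) / n - p x) *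
              Real.log (margLik F G γ0 γ2 g vτ c lam x) := by
        rw [h1]
        simp only [Gbar]
        rw [← Finset.sum_sub_distrib]
        refine Finset.sum_congr rfl fun x _ => ?_
        simp only [hpdef]
        ring
      show |GN F G γ0 γ2 g vτ c X n lam ω - Gbar F G γ0 γ2 g vτ c lam0 lam|
          ≤ ∑ _x : Option Bool, ε' * Mlog
      rw [hGNid]
      refine le_trans (Finset.abs_sum_le_sum_abs _ _) (Finset.sum_le_sum fun x _ => ?_)
      rw [abs_mul]
      have hdx : |(∑ i ∈ Finset.range n, Z x i ω) / n - p x| ≤ ε' := by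
        have := hnot x
        rw [Real.dist_eq] at this
        exact this.le
      exact mul_le_mul hdx (hMlog lam hlam x) (abs_nonneg _) hε'.le
    have hsum_lt : (∑ _x : Option Bool, ε' * Mlog) < ε := by
      rw [Finset.sum_const, Finset.card_univ]
      have hcard : Fintype.card (Option Bool) = 3 := by simp
      rw [hcard]
      have heq : (3 : ℕ) • (ε' * Mlog) = ε * (Mlog / Mb) := by
        simp only [hε'def, nsmul_eq_mul]
        field_simp
        ring
      rw [heq]
      have : Mlog / Mb < 1 := (div_lt_one hMb).2 (by linarith)
      calc ε * (Mlog / Mb) < ε * 1 := by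
            apply mul_lt_mul_of_pos_left this hε
        _ = ε := mul_one ε
    linarith
  -- conclusion by squeezing
  have hbound2 : ∀ n : ℕ,
      μ {ω | ε ≤ sSup ((fun lam =>
          |GN F G γ0 γ2 g vτ c X n lam ω - Gbar F G γ0 γ2 g vτ c lam0 lam|) '' Dtil)}
        ≤ ∑ x : Option Bool,
            μ {ω | ε' ≤ dist ((∑ i ∈ Finset.range n, Z x i ω) / n) (p x)} :=
    fun n => le_trans (measure_mono (hsub n)) (measure_iUnion_fintype_le _ _)
  have hsum0 : Tendsto (fun n : ℕ => ∑ x : Option Bool,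
      μ {ω | ε' ≤ dist ((∑ i ∈ Finset.range n, Z x i ω) / n) (p x)}) atTop (nhds 0) := by
    have := tendsto_finset_sum (Finset.univ : Finset (Option Bool))
      (fun x _ => tendstoInMeasure_iff_dist.1 (htim x) ε' hε')
    simpa using this
  exact tendsto_of_tendsto_of_tendsto_of_le_of_le tendsto_const_nhds hsum0
    (fun n => by simp) hbound2

end
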